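/- For F a field, the group homomorphism from (GL₂(F) × GL₂(F))^det := {(g,h) : det(g)det(h) = 1} to the orthogonal group of the quadratic space (M₂(F), det), given by (g,h)·x = g x hᵀ, has kernel equal to the diagonal embedding of F^× via z ↦ (zI, z^{-1}I). -/

import Mathlib

open Matrix
noncomputable section

/-- The homomorphism from (GL₂(F) × GL₂(F))^det = {(g,h) : det g · det h = 1} to the
orthogonal group of the quadratic space (M₂(F), det), given by (g,h)·x = g x hᵀ, has
kernel exactly the diagonally embedded F^×, z ↦ (zI, z⁻¹I): a pair (g,h) with
det g · det h = 1 acts trivially on M₂(F) iff it is of this form. -/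
theorem stmt4 (F : Type*) [Field F] (g h : GL (Fin 2) F)
    (hdet : (g : Matrix (Fin 2) (Fin 2) F).det * (h : Matrix (Fin 2) (Fin 2) F).det = 1) :
    (∀ x : Matrix (Fin 2) (Fin 2) F,
        (g : Matrix (Fin 2) (Fin 2) F) * x * (h : Matrix (Fin 2) (Fin 2) F)ᵀ = x) ↔
      ∃ z : Fˣ, (g : Matrix (Fin 2) (Fin 2) F) = (z : F) • (1 : Matrix (Fin 2) (Fin 2) F) ∧
        (h : Matrix (Fin 2) (Fin 2) F) = ((z⁻¹ : Fˣ) : F) • (1 : Matrix (Fin 2) (Fin 2) F) := by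
  set G : Matrix (Fin 2) (Fin 2) F := (g : Matrix (Fin 2) (Fin 2) F)
  set H : Matrix (Fin 2) (Fin 2) F := (h : Matrix (Fin 2) (Fin 2) F)
  constructor
  · intro hx
    have h1 : G * Hᵀ = 1 := by simpa using hx 1
    have h1' : Hᵀ * G = 1 := mul_eq_one_comm.mp h1
    have hcomm : ∀ x : Matrix (Fin 2) (Fin 2) F, Commute x G := by
      intro x
      have : G * x * (Hᵀ * G) = x * G := by rw [← Matrix.mul_assoc, hx x]
      rw [h1', Matrix.mul_one] at this
      exact this.symm
    obtain ⟨c, hc⟩ := mem_range_scalar_of_commute_single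
      (fun i j _ => hcomm (single i j 1))
    have hG : G = c • (1 : Matrix (Fin 2) (Fin 2) F) := by
      rw [← hc]; simp [Matrix.scalar, smul_one_eq_diagonal]
    have hc0 : c ≠ 0 := by
      intro h0
      rw [hG, h0, zero_smul, Matrix.zero_mul] at h1
      exact one_ne_zero h1.symm
    refine ⟨Units.mk0 c hc0, hG, ?_⟩
    have : (c • (1 : Matrix (Fin 2) (Fin 2) F)) * Hᵀ = 1 := by rw [← hG]; exact h1
    rw [Matrix.smul_mul, Matrix.one_mul] at this
    have hHT : Hᵀ = c⁻¹ • (1 : Matrix (Fin 2) (Fin 2) F) := by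
      rw [← this, smul_smul, inv_mul_cancel₀ hc0, one_smul]
    have := congrArg Matrix.transpose hHT
    simpa [Matrix.transpose_smul] using this
  · rintro ⟨z, hg, hh⟩ x
    rw [hg, hh]
    simp [Matrix.smul_mul, Matrix.mul_smul, smul_smul]
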